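/- Fix n, an integer t ≥ 1, and a set S ⊆ {1,…,n}. Let B = (B_{ij})_{i ∈ S, j ∉ S} have i.i.d. Bernoulli(1/2) entries. Then with probability at least 1 − (n choose t)²·2^{−t²} over B, the following holds: for every symmetric zero-diagonal matrix A ∈ {0,1}^{n×n} satisfying A_{ij} = 1 for all distinct i,j ∈ S and A_{ij} = B_{ij} for all i ∈ S, j ∉ S, every clique C of the graph with adjacency matrix A (i.e., every set C of vertices with A_{uv} = 1 for all distinct u,v ∈ C) satisfies |C ∩ S| < t or |C \ S| < t. In particular, in the semi-random planted clique model, with high probability (taking t = O(log n)) every clique in the graph either intersects the planted clique S in fewer than O(log n) vertices or contains fewer than O(log n) vertices outside S, regardless of the adversary's choices. -/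

import Mathlib

open scoped Classical

/-- Number of boolean functions forced to be `true` on a set `s`. -/
lemma card_forced {α : Type*} [Fintype α] [DecidableEq α] (s : Finset α) :
    (Finset.univ.filter fun f : α → Bool => ∀ a ∈ s, f a = true).card
      = 2 ^ (Fintype.card α - s.card) := by
  rw [← Fintype.card_subtype]
  have e : {f : α → Bool // ∀ a ∈ s, f a = true} ≃ ((sᶜ : Finset α) → Bool) :=
    { toFun := fun f a => f.1 a
      invFun := fun g => ⟨fun a => if h : a ∈ s then true else g ⟨a, by simp [h]⟩,
        fun a ha => by simp [ha]⟩
      left_inv := fun f => by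
        ext a
        by_cases h : a ∈ s
        · simp [h, f.2 a h]
        · simp [h]
      right_inv := fun g => by
        ext a
        have h : (a : α) ∉ s := Finset.mem_compl.1 a.2
        simp [h] }
  rw [Fintype.card_congr e]
  simp [Finset.card_compl]

lemma card_forced2 (n : ℕ) (T U : Finset (Fin n)) :
    (Finset.univ.filter fun b : Fin n → Fin n → Bool =>
      ∀ i ∈ T, ∀ j ∈ U, b i j = true).card = 2 ^ (n * n - T.card * U.card) := by
  rw [← Fintype.card_subtype]
  have e : {b : Fin n → Fin n → Bool // ∀ i ∈ T, ∀ j ∈ U, b i j = true}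
      ≃ {f : Fin n × Fin n → Bool // ∀ p ∈ T ×ˢ U, f p = true} :=
    ((Equiv.curry (Fin n) (Fin n) Bool).symm.subtypeEquiv (by
      intro b
      simp only [Equiv.curry_symm_apply, Finset.mem_product, Function.uncurry]
      constructor
      · intro h p hp; exact h p.1 hp.1 p.2 hp.2
      · intro h i hi j hj; exact h (i, j) ⟨hi, hj⟩))
  rw [Fintype.card_congr e, Fintype.card_subtype]
  have := card_forced (T ×ˢ U)
  simpa [Finset.card_product, Fintype.card_prod] using this

/-- **In the semi-random planted clique model, no clique has large intersection with both
the planted clique and its complement.** -/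
theorem semirandom_no_large_bilateral_clique (n t : ℕ) (ht : 1 ≤ t) (S : Finset (Fin n)) :
    1 - ((n.choose t : ℝ)) ^ 2 / 2 ^ (t ^ 2) ≤
      ((Finset.univ.filter (fun b : Fin n → Fin n → Bool =>
        ∀ A : Fin n → Fin n → Bool,
          (∀ i j, A i j = A j i) →
          (∀ i, A i i = false) →
          (∀ i ∈ S, ∀ j ∈ S, i ≠ j → A i j = true) →
          (∀ i ∈ S, ∀ j ∉ S, A i j = b i j) →
          ∀ C : Finset (Fin n),
            (∀ u ∈ C, ∀ v ∈ C, u ≠ v → A u v = true) →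
            (C ∩ S).card < t ∨ (C \ S).card < t)).card : ℝ) / 2 ^ (n * n) := by
  classical
  set Good := (Finset.univ.filter (fun b : Fin n → Fin n → Bool =>
        ∀ A : Fin n → Fin n → Bool,
          (∀ i j, A i j = A j i) →
          (∀ i, A i i = false) →
          (∀ i ∈ S, ∀ j ∈ S, i ≠ j → A i j = true) →
          (∀ i ∈ S, ∀ j ∉ S, A i j = b i j) →
          ∀ C : Finset (Fin n),
            (∀ u ∈ C, ∀ v ∈ C, u ≠ v → A u v = true) →
            (C ∩ S).card < t ∨ (C \ S).card < t)) with hGood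
  set Bad := (Finset.univ.filter (fun b : Fin n → Fin n → Bool =>
      ∃ T ∈ S.powersetCard t, ∃ U ∈ Sᶜ.powersetCard t,
        ∀ i ∈ T, ∀ j ∈ U, b i j = true)) with hBad
  -- every b not in Bad is in Good
  have hsub : ∀ b : Fin n → Fin n → Bool, b ∉ Bad → b ∈ Good := by
    intro b hb
    rw [hGood, Finset.mem_filter]
    refine ⟨Finset.mem_univ _, ?_⟩
    intro A hsym hdiag hS hBS C hC
    by_contra hcon
    push_neg at hcon
    obtain ⟨h1, h2⟩ := hcon
    obtain ⟨T, hTsub, hTcard⟩ := Finset.exists_subset_card_eq (s := C ∩ S) h1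
    obtain ⟨U, hUsub, hUcard⟩ := Finset.exists_subset_card_eq (s := C \ S) h2
    apply hb
    rw [hBad, Finset.mem_filter]
    refine ⟨Finset.mem_univ _, T, ?_, U, ?_, ?_⟩
    · rw [Finset.mem_powersetCard]
      exact ⟨fun x hx => (Finset.mem_inter.1 (hTsub hx)).2, hTcard⟩
    · rw [Finset.mem_powersetCard]
      refine ⟨fun x hx => ?_, hUcard⟩
      have := Finset.mem_sdiff.1 (hUsub hx)
      simpa [Finset.mem_compl] using this.2
    · intro i hi j hj
      have hiS : i ∈ S := (Finset.mem_inter.1 (hTsub hi)).2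
      have hiC : i ∈ C := (Finset.mem_inter.1 (hTsub hi)).1
      have hjC : j ∈ C := (Finset.mem_sdiff.1 (hUsub hj)).1
      have hjS : j ∉ S := (Finset.mem_sdiff.1 (hUsub hj)).2
      have hij : i ≠ j := fun h => hjS (h ▸ hiS)
      rw [← hBS i hiS j hjS]
      exact hC i hiC j hjC hij
  -- counting Bad
  have hBadcard : Bad.card ≤ n.choose t ^ 2 * 2 ^ (n * n - t * t) := by
    have hsub2 : Bad ⊆ (S.powersetCard t ×ˢ Sᶜ.powersetCard t).biUnion
        (fun p => Finset.univ.filter fun b : Fin n → Fin n → Bool =>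
          ∀ i ∈ p.1, ∀ j ∈ p.2, b i j = true) := by
      intro b hb
      rw [hBad, Finset.mem_filter] at hb
      obtain ⟨-, T, hT, U, hU, h⟩ := hb
      exact Finset.mem_biUnion.2 ⟨(T, U), Finset.mem_product.2 ⟨hT, hU⟩,
        Finset.mem_filter.2 ⟨Finset.mem_univ _, h⟩⟩
    calc Bad.card ≤ _ := Finset.card_le_card hsub2
      _ ≤ ∑ p ∈ S.powersetCard t ×ˢ Sᶜ.powersetCard t,
          (Finset.univ.filter fun b : Fin n → Fin n → Bool =>
            ∀ i ∈ p.1, ∀ j ∈ p.2, b i j = true).card := Finset.card_biUnion_le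
      _ = ∑ p ∈ S.powersetCard t ×ˢ Sᶜ.powersetCard t, 2 ^ (n * n - t * t) := by
          apply Finset.sum_congr rfl
          intro p hp
          obtain ⟨hp1, hp2⟩ := Finset.mem_product.1 hp
          have h1 := (Finset.mem_powersetCard.1 hp1).2
          have h2 := (Finset.mem_powersetCard.1 hp2).2
          rw [card_forced2, h1, h2]
      _ = (S.powersetCard t ×ˢ Sᶜ.powersetCard t).card * 2 ^ (n * n - t * t) := by
          rw [Finset.sum_const, smul_eq_mul]
      _ ≤ n.choose t ^ 2 * 2 ^ (n * n - t * t) := by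
          apply Nat.mul_le_mul_right
          rw [Finset.card_product, Finset.card_powersetCard, Finset.card_powersetCard, sq]
          exact Nat.mul_le_mul (Nat.choose_le_choose t (by simpa using Finset.card_le_univ S))
            (Nat.choose_le_choose t (by simpa using Finset.card_le_univ Sᶜ))
  -- total count
  have htotal : (Fintype.card (Fin n → Fin n → Bool)) = 2 ^ (n * n) := by
    simp [Fintype.card_fun, pow_mul]
  have hGB : 2 ^ (n * n) ≤ Good.card + Bad.card := by
    rw [← htotal, ← Finset.card_univ]
    have hu : (Finset.univ : Finset (Fin n → Fin n → Bool)) ⊆ Good ∪ Bad := by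
      intro b _
      by_cases h : b ∈ Bad
      · exact Finset.mem_union.2 (Or.inr h)
      · exact Finset.mem_union.2 (Or.inl (hsub b h))
    exact (Finset.card_le_card hu).trans (Finset.card_union_le _ _)
  -- real arithmetic
  have h2pos : (0:ℝ) < 2 ^ (n * n) := by positivity
  rw [le_div_iff₀ h2pos]
  have hB : (Bad.card : ℝ) ≤ (n.choose t : ℝ) ^ 2 * 2 ^ (n * n) / 2 ^ (t ^ 2) := by
    by_cases hle : t ≤ n
    · have hle2 : t * t ≤ n * n := Nat.mul_le_mul hle hle
      have : ((2:ℝ) ^ (n * n - t * t)) = 2 ^ (n * n) / 2 ^ (t ^ 2) := by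
        rw [sq, eq_div_iff (by positivity), ← pow_add, Nat.sub_add_cancel hle2]
      calc (Bad.card : ℝ) ≤ (n.choose t : ℝ) ^ 2 * 2 ^ (n * n - t * t) := by
            exact_mod_cast hBadcard
        _ = (n.choose t : ℝ) ^ 2 * 2 ^ (n * n) / 2 ^ (t ^ 2) := by rw [this]; ring
    · have : n.choose t = 0 := Nat.choose_eq_zero_of_lt (Nat.lt_of_not_le hle)
      rw [this] at hBadcard ⊢
      have : Bad.card = 0 := Nat.le_zero.1 (by simpa using hBadcard)
      simp [this]
  have hGc : (2:ℝ) ^ (n * n) - Bad.card ≤ Good.card := by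
    have : ((2:ℝ) ^ (n * n)) ≤ (Good.card : ℝ) + Bad.card := by exact_mod_cast hGB
    linarith
  calc (1 - (n.choose t : ℝ) ^ 2 / 2 ^ (t ^ 2)) * 2 ^ (n * n)
      = (2:ℝ) ^ (n * n) - (n.choose t : ℝ) ^ 2 * 2 ^ (n * n) / 2 ^ (t ^ 2) := by ring
    _ ≤ (2:ℝ) ^ (n * n) - (Bad.card : ℝ) := by linarith
    _ ≤ (Good.card : ℝ) := hGc
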